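/- arXiv:1312.7514 — 2 statements merged into one kernel-verified Lean document; each statement's English description precedes it below -/
import Mathlib

section
/- Let L be a Lelek fan. The group H(L) of all homeomorphisms of L, with the compact-open topology, is totally disconnected: for any f ≠ g in H(L) there is a clopen subset of H(L) containing f but not g. -/
/-- The equivalence relation on `(ℕ → Bool) × [0,1]` identifying two points iff they are
equal or both have second coordinate `0`. -/
def CantorFanSetoid : Setoid ((ℕ → Bool) × unitInterval) where
  r p q := p = q ∨ (p.2 = 0 ∧ q.2 = 0)
  iseqv := by
    constructor
    · intro p; exact Or.inl rfl
    · rintro p q (h | h)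
      · exact Or.inl h.symm
      · exact Or.inr ⟨h.2, h.1⟩
    · rintro p q r (h | h) (h' | h')
      · exact Or.inl (h.trans h')
      · exact Or.inr ⟨by rw [h]; exact h'.1, h'.2⟩
      · exact Or.inr ⟨h.1, by rw [← h']; exact h.2⟩
      · exact Or.inr ⟨h.1, h'.2⟩

/-- The Cantor fan: the cone over the Cantor set `{0,1}^ℕ`, i.e. the quotient of
`{0,1}^ℕ × [0,1]` collapsing `{0,1}^ℕ × {0}` to a point. -/
def CantorFan : Type := Quotient CantorFanSetoid

instance : TopologicalSpace CantorFan := instTopologicalSpaceQuotient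

/-- The top `v` of the Cantor fan. -/
def fanTop : CantorFan := Quotient.mk CantorFanSetoid (fun _ => false, 0)

/-- `e` is an endpoint of `X ⊆ CantorFan` if `e ∈ X` and for every arc contained in `X`
and containing `e`, the point `e` is an endpoint of that arc. -/
def IsEndpoint (X : Set CantorFan) (e : CantorFan) : Prop :=
  e ∈ X ∧ ∀ h : unitInterval → CantorFan, Topology.IsEmbedding h →
    Set.range h ⊆ X → e ∈ Set.range h → e = h 0 ∨ e = h 1

/-- A Lelek fan: a nondegenerate subcontinuum of the Cantor fan whose set of endpoints
is dense in it. -/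
def IsLelekFan (L : Set CantorFan) : Prop :=
  L.Nontrivial ∧ IsCompact L ∧ IsConnected L ∧ L ⊆ closure {e | IsEndpoint L e}

/-- The compact-open topology on the homeomorphism group, induced from the space of
continuous self-maps with the compact-open topology. -/
instance homeoCompactOpen (X : Type*) [TopologicalSpace X] : TopologicalSpace (X ≃ₜ X) :=
  TopologicalSpace.induced (fun h => (⟨⇑h, h.continuous⟩ : C(X, X)))
    ContinuousMap.compactOpen

/-! ### Auxiliary machinery for the proof -/

noncomputable section LelekProofAux

open Set Topology

abbrev FanPre := (ℕ → Bool) × unitInterval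

/-- The quotient map onto the Cantor fan. -/
def fmk (p : FanPre) : CantorFan := Quotient.mk CantorFanSetoid p

lemma fmk_eq_iff {p q : FanPre} : fmk p = fmk q ↔ p = q ∨ (p.2 = 0 ∧ q.2 = 0) :=
  ⟨fun h => Quotient.eq.mp h, fun h => Quotient.sound h⟩

lemma continuous_fmk : Continuous fmk := continuous_quotient_mk'

lemma fmk_surjective : Function.Surjective fmk := fun z => Quotient.exists_rep z

lemma fmk_zero (a b : ℕ → Bool) : fmk (a, 0) = fmk (b, 0) := Quotient.sound (Or.inr ⟨rfl, rfl⟩)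

lemma fanTop_eq (a : ℕ → Bool) : fmk (a, 0) = fanTop := Quotient.sound (Or.inr ⟨rfl, rfl⟩)

instance : CompactSpace CantorFan := by
  constructor
  rw [← Set.range_eq_univ.mpr fmk_surjective]
  exact isCompact_range continuous_fmk

/-- A separating family of continuous functions, used to prove Hausdorffness. -/
def fanEmb : CantorFan → ℝ × (ℕ → ℝ) :=
  Quotient.lift (fun p : FanPre => ((p.2 : ℝ), fun n => (p.2 : ℝ) * (cond (p.1 n) 1 0)))
    (by
      rintro p q (rfl | ⟨h1, h2⟩)
      · rfl
      · simp [h1, h2])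

lemma continuous_fanEmb : Continuous fanEmb := by
  apply Continuous.quotient_lift
  refine (continuous_subtype_val.comp continuous_snd).prodMk (continuous_pi fun n => ?_)
  exact (continuous_subtype_val.comp continuous_snd).mul
    (Continuous.comp (continuous_of_discreteTopology (f := fun b : Bool => (cond b 1 0 : ℝ)))
      ((continuous_apply n).comp continuous_fst))

lemma fanEmb_injective : Function.Injective fanEmb := by
  intro z w h
  obtain ⟨⟨a, s⟩, rfl⟩ := fmk_surjective z
  obtain ⟨⟨b, t⟩, rfl⟩ := fmk_surjective w
  have h1 : (s : ℝ) = t := congrArg Prod.fst h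
  have hst : s = t := Subtype.ext h1
  subst hst
  by_cases hs : s = 0
  · exact Quotient.sound (Or.inr ⟨hs, hs⟩)
  · have hs' : (s : ℝ) ≠ 0 := fun hh => hs (Subtype.ext hh)
    have h2 := congrArg Prod.snd h
    have hab : a = b := by
      funext n
      have hc : (cond (a n) 1 0 : ℝ) = cond (b n) 1 0 := mul_left_cancel₀ hs' (congrFun h2 n)
      rcases Bool.eq_false_or_eq_true (a n) with hA | hA <;>
        rcases Bool.eq_false_or_eq_true (b n) with hB | hB <;>
        simp only [hA, hB, cond_true, cond_false] at hc ⊢ <;>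
        first
          | rfl
          | exact absurd hc (by norm_num)
          | exact absurd hc.symm (by norm_num)
    rw [hab]

instance : T2Space CantorFan := by
  refine ⟨fun x y hxy => ?_⟩
  obtain ⟨U, V, hU, hV, hx, hy, hUV⟩ := t2_separation (fanEmb_injective.ne hxy)
  exact ⟨fanEmb ⁻¹' U, fanEmb ⁻¹' V, hU.preimage continuous_fanEmb,
    hV.preimage continuous_fanEmb, hx, hy, hUV.preimage _⟩

/-- The height function on the Cantor fan. -/
def fht : CantorFan → ℝ :=
  Quotient.lift (fun p : FanPre => (p.2 : ℝ))
    (by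
      rintro p q (rfl | ⟨h1, h2⟩)
      · rfl
      · simp [h1, h2])

lemma continuous_fht : Continuous fht :=
  Continuous.quotient_lift (continuous_subtype_val.comp continuous_snd) _

lemma fht_eq_zero {z : CantorFan} (h : fht z = 0) : z = fanTop := by
  obtain ⟨⟨a, t⟩, rfl⟩ := fmk_surjective z
  have ht : t = 0 := Subtype.ext h
  rw [ht]
  exact fanTop_eq a

lemma isOpen_fmk_image {S : Set FanPre} (hS : IsOpen S) (h0 : ∀ p ∈ S, p.2 ≠ 0) :
    IsOpen (fmk '' S) := by
  have hpre : fmk ⁻¹' (fmk '' S) = S := by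
    apply Set.Subset.antisymm
    · rintro p ⟨q, hq, hqe⟩
      rcases fmk_eq_iff.mp hqe with rfl | ⟨hq2, hp2⟩
      · exact hq
      · exact absurd hq2 (h0 q hq)
    · exact Set.subset_preimage_image _ _
  have hpre' : IsOpen (fmk ⁻¹' (fmk '' S)) := by rw [hpre]; exact hS
  exact (isQuotientMap_quotient_mk' (s := CantorFanSetoid)).isOpen_preimage.mp hpre'

lemma isClosed_fmk_image {S : Set FanPre} (hS : IsClosed S) : IsClosed (fmk '' S) :=
  (hS.isCompact.image continuous_fmk).isClosed

/-- Affine interpolation inside the unit interval. -/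
def affI (t₁ t₂ : unitInterval) (x : unitInterval) : unitInterval :=
  ⟨(1 - (x : ℝ)) * t₁ + x * t₂, by
    constructor
    · nlinarith [x.2.1, x.2.2, t₁.2.1, t₂.2.1]
    · nlinarith [x.2.1, x.2.2, t₁.2.1, t₁.2.2, t₂.2.1, t₂.2.2]⟩

lemma affI_coe (t₁ t₂ x : unitInterval) :
    (affI t₁ t₂ x : ℝ) = (1 - (x : ℝ)) * t₁ + x * t₂ := rfl

lemma affI_zero (t₁ t₂ : unitInterval) : affI t₁ t₂ 0 = t₁ := by
  apply Subtype.ext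
  show (1 - ((0 : unitInterval) : ℝ)) * t₁ + ((0 : unitInterval) : ℝ) * t₂ = t₁
  norm_num

lemma affI_one (t₁ t₂ : unitInterval) : affI t₁ t₂ 1 = t₂ := by
  apply Subtype.ext
  show (1 - ((1 : unitInterval) : ℝ)) * t₁ + ((1 : unitInterval) : ℝ) * t₂ = t₂
  norm_num

lemma continuous_affI (t₁ t₂ : unitInterval) : Continuous (affI t₁ t₂) := by
  apply Continuous.subtype_mk
  exact ((continuous_const.sub continuous_subtype_val).mul continuous_const).add
    (continuous_subtype_val.mul continuous_const)

lemma affI_injective {t₁ t₂ : unitInterval} (h : t₁ ≠ t₂) : Function.Injective (affI t₁ t₂) := by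
  intro x y hxy
  have h' : (t₁ : ℝ) ≠ t₂ := fun hh => h (Subtype.ext hh)
  have hval := congrArg Subtype.val hxy
  have hne : (t₂ : ℝ) - t₁ ≠ 0 := sub_ne_zero.mpr (Ne.symm h')
  apply Subtype.ext
  have h2 : (x : ℝ) * ((t₂ : ℝ) - t₁) = (y : ℝ) * ((t₂ : ℝ) - t₁) := by
    have hv : (1 - (x : ℝ)) * t₁ + x * t₂ = (1 - (y : ℝ)) * t₁ + y * t₂ := hval
    ring_nf
    ring_nf at hv
    linarith
  exact mul_right_cancel₀ hne h2

lemma affI_mem {α β : unitInterval} (h : (α : ℝ) ≤ β) (x : unitInterval) :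
    (α : ℝ) ≤ affI α β x ∧ (affI α β x : ℝ) ≤ β := by
  rw [affI_coe]
  constructor
  · nlinarith [x.2.1, x.2.2]
  · nlinarith [x.2.1, x.2.2]

lemma isEmbedding_legArc (a : ℕ → Bool) {t₁ t₂ : unitInterval} (h : t₁ ≠ t₂) :
    Topology.IsEmbedding (fun x => fmk (a, affI t₁ t₂ x)) := by
  apply Topology.IsClosedEmbedding.isEmbedding
  apply Continuous.isClosedEmbedding
  · exact continuous_fmk.comp (continuous_const.prodMk (continuous_affI t₁ t₂))
  · intro x y hxy
    rcases fmk_eq_iff.mp hxy with heq | ⟨h1, h2⟩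
    · exact affI_injective h (congrArg Prod.snd heq)
    · exact affI_injective h (h1.trans h2.symm)

/-- A Lelek fan is not contained in a single leg of the Cantor fan. -/
lemma not_subset_leg {L : Set CantorFan} (hL : IsLelekFan L) (a : ℕ → Bool) :
    ¬ (L ⊆ fmk '' ({a} ×ˢ (Set.univ : Set unitInterval))) := by
  intro hsub
  have hrep : ∀ z ∈ L, ∃ u : unitInterval, fmk (a, u) = z := by
    intro z hz
    obtain ⟨⟨a', u⟩, hp, he⟩ := hsub hz
    have ha' : a' = a := hp.1
    subst ha'
    exact ⟨u, he⟩
  have hT : ∀ {t₁ t₂ u : unitInterval}, fmk (a, t₁) ∈ L → fmk (a, t₂) ∈ L →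
      t₁ ≤ u → u ≤ t₂ → fmk (a, u) ∈ L := by
    intro t₁ t₂ u h₁ h₂ h₁u hu₂
    by_contra hnot
    have hut₁ : u ≠ t₁ := fun h => hnot (h ▸ h₁)
    have hut₂ : u ≠ t₂ := fun h => hnot (h ▸ h₂)
    have h1' : (t₁ : ℝ) < u :=
      lt_of_le_of_ne (Subtype.coe_le_coe.mpr h₁u) (fun h => hut₁ (Subtype.ext h.symm))
    have h2' : (u : ℝ) < t₂ :=
      lt_of_le_of_ne (Subtype.coe_le_coe.mpr hu₂) (fun h => hut₂ (Subtype.ext h))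
    have hcov : L ⊆ fht ⁻¹' Set.Iio (u : ℝ) ∪ fht ⁻¹' Set.Ioi (u : ℝ) := by
      intro z hz
      obtain ⟨w, rfl⟩ := hrep z hz
      have hwu : (w : ℝ) ≠ u := fun h => hnot (by rwa [show w = u from Subtype.ext h] at hz)
      rcases lt_or_gt_of_ne hwu with h | h
      · exact Or.inl h
      · exact Or.inr h
    obtain ⟨w, hwL, hw1, hw2⟩ := hL.2.2.1.2 _ _
      (isOpen_Iio.preimage continuous_fht) (isOpen_Ioi.preimage continuous_fht) hcov
      ⟨fmk (a, t₁), h₁, Set.mem_preimage.mpr (Set.mem_Iio.mpr h1')⟩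
      ⟨fmk (a, t₂), h₂, Set.mem_preimage.mpr (Set.mem_Ioi.mpr h2')⟩
    have hw1' : fht w < (u : ℝ) := hw1
    have hw2' : (u : ℝ) < fht w := hw2
    linarith
  obtain ⟨x, hx, y, hy, hxy⟩ := hL.1
  obtain ⟨s₁, rfl⟩ := hrep x hx
  obtain ⟨s₂, rfl⟩ := hrep y hy
  have hs : s₁ ≠ s₂ := fun h => hxy (by rw [h])
  obtain ⟨α, β, hαL, hβL, hαβ⟩ :
      ∃ α β : unitInterval, fmk (a, α) ∈ L ∧ fmk (a, β) ∈ L ∧ (α : ℝ) < β := by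
    rcases hs.lt_or_gt with h | h
    · exact ⟨s₁, s₂, hx, hy, Subtype.coe_lt_coe.mpr h⟩
    · exact ⟨s₂, s₁, hy, hx, Subtype.coe_lt_coe.mpr h⟩
  set m : unitInterval := affI α β ⟨1/2, by constructor <;> norm_num⟩ with hm
  have hmval : (m : ℝ) = (1 - (1/2 : ℝ)) * α + (1/2 : ℝ) * β := rfl
  have hm1 : (α : ℝ) < m := by rw [hmval]; linarith
  have hm2 : (m : ℝ) < β := by rw [hmval]; linarith
  have hmL : fmk (a, m) ∈ L :=
    hT hαL hβL (Subtype.coe_le_coe.mp hm1.le) (Subtype.coe_le_coe.mp hm2.le)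
  have hmE := hL.2.2.2 hmL
  rw [mem_closure_iff] at hmE
  obtain ⟨e, heO, heE⟩ := hmE (fht ⁻¹' Set.Ioo (α : ℝ) (β : ℝ))
    (isOpen_Ioo.preimage continuous_fht) (Set.mem_preimage.mpr (Set.mem_Ioo.mpr ⟨hm1, hm2⟩))
  have heE : IsEndpoint L e := heE
  obtain ⟨u, rfl⟩ := hrep e heE.1
  have hu : (α : ℝ) < u ∧ (u : ℝ) < β := heO
  have hαβ' : α ≠ β := fun h => (lt_irrefl _ (h ▸ hαβ)).elim
  have harc := isEmbedding_legArc a hαβ'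
  have hrange : Set.range (fun x => fmk (a, affI α β x)) ⊆ L := by
    rintro z ⟨w, rfl⟩
    have hb := affI_mem hαβ.le w
    exact hT hαL hβL (Subtype.coe_le_coe.mp hb.1) (Subtype.coe_le_coe.mp hb.2)
  have hne : (β : ℝ) - α ≠ 0 := ne_of_gt (by linarith)
  have hmem : fmk (a, u) ∈ Set.range (fun x => fmk (a, affI α β x)) := by
    have hx1 : (0 : ℝ) ≤ ((u : ℝ) - α) / ((β : ℝ) - α) := by
      apply div_nonneg <;> linarith [hu.1]
    have hx2 : ((u : ℝ) - α) / ((β : ℝ) - α) ≤ 1 := by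
      rw [div_le_one (by linarith)]; linarith [hu.2]
    refine ⟨⟨((u : ℝ) - α) / ((β : ℝ) - α), hx1, hx2⟩, ?_⟩
    have hXu : affI α β ⟨((u : ℝ) - α) / ((β : ℝ) - α), hx1, hx2⟩ = u := by
      apply Subtype.ext
      rw [affI_coe]
      field_simp
      ring
    exact congrArg (fun w => fmk (a, w)) hXu
  rcases heE.2 _ harc hrange hmem with h0 | h1
  · simp only [affI_zero] at h0
    rcases fmk_eq_iff.mp h0 with heq | ⟨hz1, hz2⟩
    · have : u = α := congrArg Prod.snd heq
      rw [this] at hu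
      exact lt_irrefl _ hu.1
    · have hz1' : u = 0 := hz1
      have hz2' : α = 0 := hz2
      rw [hz1', hz2'] at hu
      exact lt_irrefl _ hu.1
  · simp only [affI_one] at h1
    rcases fmk_eq_iff.mp h1 with heq | ⟨hz1, hz2⟩
    · have : u = β := congrArg Prod.snd heq
      rw [this] at hu
      exact lt_irrefl _ hu.2
    · have hz1' : u = 0 := hz1
      have hz2' : β = 0 := hz2
      rw [hz1', hz2'] at hu
      exact lt_irrefl _ hu.2

/-- A Lelek fan contains the top of the Cantor fan. -/
lemma top_mem {L : Set CantorFan} (hL : IsLelekFan L) : fanTop ∈ L := by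
  by_contra hv
  have hne : L.Nonempty := hL.1.nonempty
  obtain ⟨z₀, hz₀, hmin⟩ := hL.2.1.exists_isMinOn hne continuous_fht.continuousOn
  have hmin' : ∀ z ∈ L, fht z₀ ≤ fht z := fun z hz => hmin hz
  set δ := fht z₀ with hδ
  have hδ0 : 0 ≤ δ := by
    obtain ⟨⟨c, t⟩, rfl⟩ := fmk_surjective z₀
    exact t.2.1
  have hδpos : 0 < δ :=
    lt_of_le_of_ne hδ0 (fun h => hv ((fht_eq_zero h.symm) ▸ hz₀))
  obtain ⟨x₀, hx₀⟩ := hne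
  obtain ⟨⟨a₀, s₀⟩, rfl⟩ := fmk_surjective x₀
  obtain ⟨z, hzL, hznot⟩ := Set.not_subset.mp (not_subset_leg hL a₀)
  obtain ⟨⟨b, t⟩, rfl⟩ := fmk_surjective z
  have hb : b ≠ a₀ := by
    rintro rfl
    exact hznot ⟨(b, t), ⟨rfl, trivial⟩, rfl⟩
  obtain ⟨n, hn⟩ := Function.ne_iff.mp (Ne.symm hb)
  set K : Set (ℕ → Bool) := (fun c : ℕ → Bool => c n) ⁻¹' {a₀ n} with hK
  have hKopen : IsOpen K := (isOpen_discrete _).preimage (continuous_apply n)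
  have hKclosed : IsClosed K := (isClosed_discrete _).preimage (continuous_apply n)
  set U := fmk '' (K ×ˢ {t' : unitInterval | δ/2 < (t' : ℝ)}) with hU
  set C := fmk '' (K ×ˢ {t' : unitInterval | δ ≤ (t' : ℝ)}) with hC
  have hUopen : IsOpen U := by
    apply isOpen_fmk_image (hKopen.prod (isOpen_Ioi.preimage continuous_subtype_val))
    intro p hp h0
    have h2 : δ/2 < (p.2 : ℝ) := hp.2
    rw [h0] at h2
    rw [show ((0 : unitInterval) : ℝ) = 0 from rfl] at h2
    linarith
  have hCclosed : IsClosed C :=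
    isClosed_fmk_image (hKclosed.prod (isClosed_Ici.preimage continuous_subtype_val))
  have hLU : L ⊆ U ∪ Cᶜ := by
    intro w hw
    by_cases hwC : w ∈ C
    · obtain ⟨p, hp, rfl⟩ := hwC
      refine Or.inl ⟨p, ⟨hp.1, ?_⟩, rfl⟩
      have hδt : δ ≤ (p.2 : ℝ) := hp.2
      show δ/2 < (p.2 : ℝ)
      linarith
    · exact Or.inr hwC
  have hU1 : (L ∩ U).Nonempty := by
    refine ⟨fmk (a₀, s₀), hx₀, ⟨(a₀, s₀), ⟨rfl, ?_⟩, rfl⟩⟩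
    have : δ ≤ (s₀ : ℝ) := hmin' _ hx₀
    show δ/2 < (s₀ : ℝ)
    linarith
  have hC1 : (L ∩ Cᶜ).Nonempty := by
    refine ⟨fmk (b, t), hzL, ?_⟩
    rintro ⟨⟨c, t'⟩, ⟨hc, ht'⟩, he⟩
    rcases fmk_eq_iff.mp he with heq | ⟨h1, h2⟩
    · have hcb : c = b := congrArg Prod.fst heq
      have hbK : b n = a₀ n := hcb ▸ hc
      exact hn hbK.symm
    · have h2' : δ ≤ (t' : ℝ) := ht'
      have h1' : t' = 0 := h1
      rw [h1'] at h2'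
      have h00 : ((0 : unitInterval) : ℝ) = 0 := rfl
      rw [h00] at h2'
      linarith
  obtain ⟨w, hwL, hwU, hwC⟩ := hL.2.2.1.2 _ _ hUopen hCclosed.isOpen_compl hLU hU1 hC1
  obtain ⟨⟨c, t'⟩, ⟨hc, ht'⟩, rfl⟩ := hwU
  exact hwC ⟨(c, t'), ⟨hc, hmin' _ hwL⟩, rfl⟩

/-- Segment lemma: a Lelek fan contains the whole segment below any of its points. -/
lemma seg_mem {L : Set CantorFan} (hL : IsLelekFan L) {a : ℕ → Bool} {s u : unitInterval}
    (hs : fmk (a, s) ∈ L) (hu : (u : ℝ) ≤ s) : fmk (a, u) ∈ L := by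
  by_contra hy
  have hu0 : (0 : ℝ) < u := by
    refine lt_of_le_of_ne u.2.1 (fun h => hy ?_)
    rw [show u = 0 from Subtype.ext h.symm, fanTop_eq a]
    exact top_mem hL
  have hus : (u : ℝ) < s :=
    lt_of_le_of_ne hu (fun h => hy (by rw [show u = s from Subtype.ext h]; exact hs))
  have hCpre : IsClosed (fmk ⁻¹' L) := hL.2.1.isClosed.preimage continuous_fmk
  have hmemC : (a, u) ∈ (fmk ⁻¹' L)ᶜ := hy
  obtain ⟨U₁, U₂, hU₁, hU₂, ha1, hu2, hsub⟩ := isOpen_prod_iff.mp hCpre.isOpen_compl a u hmemC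
  obtain ⟨I, hIfin, hIsub⟩ : ∃ I : Set ℕ, I.Finite ∧ I.pi (fun i => {a i}) ⊆ U₁ := by
    have hmem : U₁ ∈ nhds a := hU₁.mem_nhds ha1
    rw [nhds_pi] at hmem
    obtain ⟨I, hIfin, tt, htt, hsub'⟩ := Filter.mem_pi.mp hmem
    refine ⟨I, hIfin, fun c hc => hsub' (fun i hi => ?_)⟩
    have hci : c i = a i := hc i hi
    rw [hci]
    exact mem_of_mem_nhds (htt i)
  set K := I.pi (fun i => ({a i} : Set Bool)) with hKdef
  have hKopen : IsOpen K := isOpen_set_pi hIfin (fun i _ => isOpen_discrete _)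
  have hKclosed : IsClosed K := isClosed_set_pi (fun i _ => isClosed_discrete _)
  have haK : a ∈ K := fun i _ => rfl
  obtain ⟨ε, hε, hball⟩ := Metric.isOpen_iff.mp hU₂ u hu2
  have hforb : ∀ c ∈ K, ∀ t' : unitInterval, |(t' : ℝ) - u| < ε → fmk (c, t') ∉ L := by
    intro c hc t' hd hmem
    refine hsub (Set.mk_mem_prod (hIsub hc) (hball ?_)) hmem
    rw [Metric.mem_ball, Subtype.dist_eq, Real.dist_eq]
    exact hd
  have hse : (u : ℝ) + ε ≤ s := by
    by_contra hlt
    push_neg at hlt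
    exact hforb a haK s (abs_sub_lt_iff.mpr ⟨by linarith, by linarith⟩) hs
  set Uo := fmk '' (K ×ˢ {t' : unitInterval | (u : ℝ) < t'}) with hUo
  set C := fmk '' (K ×ˢ {t' : unitInterval | (u : ℝ) + ε ≤ t'}) with hCdef
  have hUoopen : IsOpen Uo := by
    apply isOpen_fmk_image (hKopen.prod (isOpen_Ioi.preimage continuous_subtype_val))
    intro p hp h0
    have h2 : (u : ℝ) < (p.2 : ℝ) := hp.2
    rw [h0] at h2
    rw [show ((0 : unitInterval) : ℝ) = 0 from rfl] at h2
    linarith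
  have hCclosed : IsClosed C :=
    isClosed_fmk_image (hKclosed.prod (isClosed_Ici.preimage continuous_subtype_val))
  have hLcover : L ⊆ Uo ∪ Cᶜ := by
    intro w hw
    by_cases hwC : w ∈ C
    · obtain ⟨p, hp, rfl⟩ := hwC
      refine Or.inl ⟨p, ⟨hp.1, ?_⟩, rfl⟩
      have hδt : (u : ℝ) + ε ≤ (p.2 : ℝ) := hp.2
      show (u : ℝ) < (p.2 : ℝ)
      linarith
    · exact Or.inr hwC
  have h1 : (L ∩ Uo).Nonempty := ⟨fmk (a, s), hs, ⟨(a, s), ⟨haK, hus⟩, rfl⟩⟩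
  have h2 : (L ∩ Cᶜ).Nonempty := by
    refine ⟨fanTop, top_mem hL, ?_⟩
    rintro ⟨⟨c, t'⟩, ⟨hc, ht'⟩, he⟩
    rw [← fanTop_eq (fun _ => false)] at he
    have h00 : ((0 : unitInterval) : ℝ) = 0 := rfl
    rcases fmk_eq_iff.mp he with heq | ⟨hz1, hz2⟩
    · have ht0 : t' = (0 : unitInterval) := congrArg Prod.snd heq
      have ht'' : (u : ℝ) + ε ≤ (t' : ℝ) := ht'
      rw [ht0, h00] at ht''
      linarith
    · have ht'' : (u : ℝ) + ε ≤ (t' : ℝ) := ht'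
      have hz1' : t' = 0 := hz1
      rw [hz1', h00] at ht''
      linarith
  obtain ⟨w, hwL, hwU, hwC⟩ := hL.2.2.1.2 _ _ hUoopen hCclosed.isOpen_compl hLcover h1 h2
  obtain ⟨⟨c, t'⟩, ⟨hc, ht'⟩, rfl⟩ := hwU
  have hge : (u : ℝ) + ε ≤ t' := by
    by_contra hlt
    push_neg at hlt
    have ht'2 : (u : ℝ) < t' := ht'
    exact hforb c hc t' (abs_sub_lt_iff.mpr ⟨by linarith, by linarith⟩) hwL
  exact hwC ⟨(c, t'), ⟨hc, hge⟩, rfl⟩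

/-- A Lelek fan contains points on at least two distinct legs. -/
lemma two_legs {L : Set CantorFan} (hL : IsLelekFan L) :
    ∃ (a b : ℕ → Bool) (s t : unitInterval), a ≠ b ∧ 0 < (s : ℝ) ∧ 0 < (t : ℝ) ∧
      fmk (a, s) ∈ L ∧ fmk (b, t) ∈ L := by
  obtain ⟨x, hx, y, hy, hxy⟩ := hL.1
  obtain ⟨⟨a₁, s₁⟩, rfl⟩ := fmk_surjective x
  obtain ⟨⟨a₂, s₂⟩, rfl⟩ := fmk_surjective y
  have hpos : ∃ (a : ℕ → Bool) (s : unitInterval), 0 < (s : ℝ) ∧ fmk (a, s) ∈ L := by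
    rcases eq_or_lt_of_le s₁.2.1 with h | h
    · rcases eq_or_lt_of_le s₂.2.1 with h' | h'
      · exfalso
        apply hxy
        rw [show s₁ = 0 from Subtype.ext h.symm, show s₂ = 0 from Subtype.ext h'.symm]
        exact fmk_zero a₁ a₂
      · exact ⟨a₂, s₂, h', hy⟩
    · exact ⟨a₁, s₁, h, hx⟩
  obtain ⟨a, s, hs, haL⟩ := hpos
  obtain ⟨z, hzL, hznot⟩ := Set.not_subset.mp (not_subset_leg hL a)
  obtain ⟨⟨b, t⟩, rfl⟩ := fmk_surjective z
  have ht : 0 < (t : ℝ) := by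
    refine lt_of_le_of_ne t.2.1 (fun h => ?_)
    apply hznot
    refine ⟨(a, 0), ⟨rfl, trivial⟩, ?_⟩
    rw [show t = 0 from Subtype.ext h.symm]
    exact fmk_zero a b
  have hab : a ≠ b := by
    rintro rfl
    exact hznot ⟨(a, t), ⟨rfl, trivial⟩, rfl⟩
  exact ⟨a, b, s, t, hab, hs, ht, haL, hzL⟩

/-- Descending half of the arc through the top. -/
def sdown (s : unitInterval) (x : unitInterval) : unitInterval :=
  ⟨(s : ℝ) * max 0 (1 - 2*(x : ℝ)), by
    constructor
    · exact mul_nonneg s.2.1 (le_max_left _ _)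
    · have hx0 := x.2.1
      have hm : max 0 (1 - 2*(x : ℝ)) ≤ 1 := max_le (by norm_num) (by linarith)
      nlinarith [s.2.1, s.2.2]⟩

/-- Ascending half of the arc through the top. -/
def sup' (t : unitInterval) (x : unitInterval) : unitInterval :=
  ⟨(t : ℝ) * max 0 (2*(x : ℝ) - 1), by
    constructor
    · exact mul_nonneg t.2.1 (le_max_left _ _)
    · have hx1 := x.2.2
      have hm : max 0 (2*(x : ℝ) - 1) ≤ 1 := max_le (by norm_num) (by linarith)
      nlinarith [t.2.1, t.2.2]⟩

/-- The arc passing through the top of the fan, joining points on two legs. -/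
noncomputable def vArc (a b : ℕ → Bool) (s t : unitInterval) (x : unitInterval) : CantorFan :=
  if (x : ℝ) ≤ 1/2 then fmk (a, sdown s x) else fmk (b, sup' t x)

lemma continuous_sdown (s : unitInterval) : Continuous (sdown s) := by
  apply Continuous.subtype_mk
  exact continuous_const.mul
    (continuous_const.max (continuous_const.sub (continuous_const.mul continuous_subtype_val)))

lemma continuous_sup' (t : unitInterval) : Continuous (sup' t) := by
  apply Continuous.subtype_mk
  exact continuous_const.mul
    (continuous_const.max ((continuous_const.mul continuous_subtype_val).sub continuous_const))

lemma vArc_apply_le {a b : ℕ → Bool} {s t : unitInterval} {x : unitInterval}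
    (h : (x : ℝ) ≤ 1/2) : vArc a b s t x = fmk (a, sdown s x) := if_pos h

lemma vArc_apply_gt {a b : ℕ → Bool} {s t : unitInterval} {x : unitInterval}
    (h : ¬ ((x : ℝ) ≤ 1/2)) : vArc a b s t x = fmk (b, sup' t x) := if_neg h

lemma continuous_vArc (a b : ℕ → Bool) (s t : unitInterval) : Continuous (vArc a b s t) := by
  apply Continuous.if_le
  · exact continuous_fmk.comp (continuous_const.prodMk (continuous_sdown s))
  · exact continuous_fmk.comp (continuous_const.prodMk (continuous_sup' t))
  · exact continuous_subtype_val
  · exact continuous_const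
  · intro x hx
    have h1 : sdown s x = 0 := Subtype.ext (by
      show (s : ℝ) * max 0 (1 - 2*(x : ℝ)) = ((0 : unitInterval) : ℝ)
      rw [hx]; norm_num)
    have h2 : sup' t x = 0 := Subtype.ext (by
      show (t : ℝ) * max 0 (2*(x : ℝ) - 1) = ((0 : unitInterval) : ℝ)
      rw [hx]; norm_num)
    rw [h1, h2]
    exact fmk_zero a b

lemma vArc_injective {a b : ℕ → Bool} {s t : unitInterval} (hab : a ≠ b)
    (hs : 0 < (s : ℝ)) (ht : 0 < (t : ℝ)) : Function.Injective (vArc a b s t) := by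
  intro x y hxy
  have h00 : ((0 : unitInterval) : ℝ) = 0 := rfl
  rcases le_or_gt (x : ℝ) (1/2) with hx | hx <;> rcases le_or_gt (y : ℝ) (1/2) with hy' | hy'
  · rw [vArc_apply_le hx, vArc_apply_le hy'] at hxy
    rcases fmk_eq_iff.mp hxy with heq | ⟨h1, h2⟩
    · have h2 : sdown s x = sdown s y := congrArg Prod.snd heq
      have h3 : (s : ℝ) * max 0 (1 - 2*(x : ℝ)) = (s : ℝ) * max 0 (1 - 2*(y : ℝ)) :=
        congrArg Subtype.val h2
      rw [max_eq_right (by linarith : (0:ℝ) ≤ 1 - 2*(x : ℝ)),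
        max_eq_right (by linarith : (0:ℝ) ≤ 1 - 2*(y : ℝ))] at h3
      have := mul_left_cancel₀ (ne_of_gt hs) h3
      exact Subtype.ext (by linarith)
    · have e1 : (s : ℝ) * max 0 (1 - 2*(x : ℝ)) = 0 := (congrArg Subtype.val h1).trans h00
      have e2 : (s : ℝ) * max 0 (1 - 2*(y : ℝ)) = 0 := (congrArg Subtype.val h2).trans h00
      rw [max_eq_right (by linarith : (0:ℝ) ≤ 1 - 2*(x : ℝ))] at e1
      rw [max_eq_right (by linarith : (0:ℝ) ≤ 1 - 2*(y : ℝ))] at e2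
      have hx2 : (x : ℝ) = 1/2 := by
        rcases mul_eq_zero.mp e1 with h | h
        · exact absurd h (ne_of_gt hs)
        · linarith
      have hy2 : (y : ℝ) = 1/2 := by
        rcases mul_eq_zero.mp e2 with h | h
        · exact absurd h (ne_of_gt hs)
        · linarith
      exact Subtype.ext (hx2.trans hy2.symm)
  · rw [vArc_apply_le hx, vArc_apply_gt (not_le.mpr hy')] at hxy
    exfalso
    rcases fmk_eq_iff.mp hxy with heq | ⟨h1, h2⟩
    · exact hab (congrArg Prod.fst heq)
    · have e2 : (t : ℝ) * max 0 (2*(y : ℝ) - 1) = 0 := (congrArg Subtype.val h2).trans h00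
      rw [max_eq_right (by linarith : (0:ℝ) ≤ 2*(y : ℝ) - 1)] at e2
      have : 0 < (t : ℝ) * (2*(y : ℝ) - 1) := mul_pos ht (by linarith)
      linarith
  · rw [vArc_apply_gt (not_le.mpr hx), vArc_apply_le hy'] at hxy
    exfalso
    rcases fmk_eq_iff.mp hxy with heq | ⟨h1, h2⟩
    · exact hab (congrArg Prod.fst heq).symm
    · have e1 : (t : ℝ) * max 0 (2*(x : ℝ) - 1) = 0 := (congrArg Subtype.val h1).trans h00
      rw [max_eq_right (by linarith : (0:ℝ) ≤ 2*(x : ℝ) - 1)] at e1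
      have : 0 < (t : ℝ) * (2*(x : ℝ) - 1) := mul_pos ht (by linarith)
      linarith
  · rw [vArc_apply_gt (not_le.mpr hx), vArc_apply_gt (not_le.mpr hy')] at hxy
    rcases fmk_eq_iff.mp hxy with heq | ⟨h1, h2⟩
    · have h2 : sup' t x = sup' t y := congrArg Prod.snd heq
      have h3 : (t : ℝ) * max 0 (2*(x : ℝ) - 1) = (t : ℝ) * max 0 (2*(y : ℝ) - 1) :=
        congrArg Subtype.val h2
      rw [max_eq_right (by linarith : (0:ℝ) ≤ 2*(x : ℝ) - 1),
        max_eq_right (by linarith : (0:ℝ) ≤ 2*(y : ℝ) - 1)] at h3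
      have := mul_left_cancel₀ (ne_of_gt ht) h3
      exact Subtype.ext (by linarith)
    · exfalso
      have e1 : (t : ℝ) * max 0 (2*(x : ℝ) - 1) = 0 := (congrArg Subtype.val h1).trans h00
      rw [max_eq_right (by linarith : (0:ℝ) ≤ 2*(x : ℝ) - 1)] at e1
      have : 0 < (t : ℝ) * (2*(x : ℝ) - 1) := mul_pos ht (by linarith)
      linarith

lemma vArc_zero {a b : ℕ → Bool} {s t : unitInterval} : vArc a b s t 0 = fmk (a, s) := by
  rw [vArc_apply_le (by rw [show ((0 : unitInterval) : ℝ) = 0 from rfl]; norm_num)]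
  have h : sdown s 0 = s := Subtype.ext (by
    show (s : ℝ) * max 0 (1 - 2*((0 : unitInterval) : ℝ)) = s
    rw [show ((0 : unitInterval) : ℝ) = 0 from rfl]
    norm_num)
  rw [h]

lemma vArc_one {a b : ℕ → Bool} {s t : unitInterval} : vArc a b s t 1 = fmk (b, t) := by
  rw [vArc_apply_gt (by rw [show ((1 : unitInterval) : ℝ) = 1 from rfl]; norm_num)]
  have h : sup' t 1 = t := Subtype.ext (by
    show (t : ℝ) * max 0 (2*((1 : unitInterval) : ℝ) - 1) = t
    rw [show ((1 : unitInterval) : ℝ) = 1 from rfl]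
    norm_num)
  rw [h]

lemma vArc_half {a b : ℕ → Bool} {s t : unitInterval} :
    vArc a b s t ⟨1/2, by constructor <;> norm_num⟩ = fanTop := by
  rw [vArc_apply_le (by norm_num)]
  have h : sdown s ⟨1/2, by constructor <;> norm_num⟩ = 0 := Subtype.ext (by
    show (s : ℝ) * max 0 (1 - 2*(1/2 : ℝ)) = ((0 : unitInterval) : ℝ)
    norm_num)
  rw [h]
  exact fanTop_eq a

lemma vArc_range_subset {L : Set CantorFan} (hL : IsLelekFan L) {a b : ℕ → Bool}
    {s t : unitInterval} (haL : fmk (a, s) ∈ L) (hbL : fmk (b, t) ∈ L) :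
    Set.range (vArc a b s t) ⊆ L := by
  rintro z ⟨x, rfl⟩
  by_cases h : (x : ℝ) ≤ 1/2
  · rw [vArc_apply_le h]
    apply seg_mem hL haL
    show (s : ℝ) * max 0 (1 - 2*(x : ℝ)) ≤ s
    have h1 : max 0 (1 - 2*(x : ℝ)) ≤ 1 := max_le (by norm_num) (by linarith [x.2.1])
    nlinarith [s.2.1]
  · rw [vArc_apply_gt h]
    apply seg_mem hL hbL
    show (t : ℝ) * max 0 (2*(x : ℝ) - 1) ≤ t
    have h1 : max 0 (2*(x : ℝ) - 1) ≤ 1 := max_le (by norm_num) (by linarith [x.2.2])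
    nlinarith [t.2.1]

/-- The top of the fan is not an endpoint of a Lelek fan. -/
lemma top_not_endpoint {L : Set CantorFan} (hL : IsLelekFan L) : ¬ IsEndpoint L fanTop := by
  obtain ⟨a, b, s, t, hab, hs, ht, haL, hbL⟩ := two_legs hL
  rintro ⟨-, hend⟩
  have hemb : Topology.IsEmbedding (vArc a b s t) :=
    (Continuous.isClosedEmbedding (continuous_vArc a b s t)
      (vArc_injective hab hs ht)).isEmbedding
  have hmem : fanTop ∈ Set.range (vArc a b s t) :=
    ⟨⟨1/2, by constructor <;> norm_num⟩, vArc_half⟩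
  rcases hend _ hemb (vArc_range_subset hL haL hbL) hmem with h0 | h1
  · rw [vArc_zero, ← fanTop_eq (fun _ => false)] at h0
    rcases fmk_eq_iff.mp h0.symm with heq | ⟨h1', h2'⟩
    · have h2 : s = (0 : unitInterval) := congrArg Prod.snd heq
      rw [h2] at hs
      exact lt_irrefl _ hs
    · have h2'' : s = 0 := h1'
      rw [h2''] at hs
      exact lt_irrefl _ hs
  · rw [vArc_one, ← fanTop_eq (fun _ => false)] at h1
    rcases fmk_eq_iff.mp h1.symm with heq | ⟨h1', h2'⟩
    · have h2 : t = (0 : unitInterval) := congrArg Prod.snd heq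
      rw [h2] at ht
      exact lt_irrefl _ ht
    · have h2'' : t = 0 := h1'
      rw [h2''] at ht
      exact lt_irrefl _ ht

/-- Every endpoint of a Lelek fan has a representative with positive height. -/
lemma endpoint_rep {L : Set CantorFan} (hL : IsLelekFan L) {e : CantorFan}
    (he : IsEndpoint L e) :
    ∃ (c : ℕ → Bool) (t' : unitInterval), 0 < (t' : ℝ) ∧ fmk (c, t') = e := by
  obtain ⟨⟨c, t'⟩, rfl⟩ := fmk_surjective e
  refine ⟨c, t', ?_, rfl⟩
  refine lt_of_le_of_ne t'.2.1 (fun h => ?_)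
  rw [show t' = 0 from Subtype.ext h.symm, fanTop_eq c] at he
  exact top_not_endpoint hL he

/-- Two distinct endpoints cannot lie on the same leg. -/
lemma endpoint_same_leg {L : Set CantorFan} (hL : IsLelekFan L) {c : ℕ → Bool}
    {s t : unitInterval} (hs : 0 < (s : ℝ)) (hst : (s : ℝ) < t)
    (hsE : IsEndpoint L (fmk (c, s))) (htL : fmk (c, t) ∈ L) : False := by
  have htpos : (0 : ℝ) < t := by linarith
  have h0t : (0 : unitInterval) ≠ t := by
    intro h
    have : ((0 : unitInterval) : ℝ) = t := congrArg Subtype.val h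
    rw [show ((0 : unitInterval) : ℝ) = 0 from rfl] at this
    linarith
  have hemb : Topology.IsEmbedding (fun x => fmk (c, affI 0 t x)) := isEmbedding_legArc c h0t
  have hrange : Set.range (fun x => fmk (c, affI 0 t x)) ⊆ L := by
    rintro z ⟨x, rfl⟩
    apply seg_mem hL htL
    exact (affI_mem (by rw [show ((0 : unitInterval) : ℝ) = 0 from rfl]; linarith) x).2
  have hmem : fmk (c, s) ∈ Set.range (fun x => fmk (c, affI 0 t x)) := by
    refine ⟨⟨(s : ℝ)/t, div_nonneg s.2.1 htpos.le, by rw [div_le_one htpos]; linarith⟩, ?_⟩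
    have hXu : affI 0 t ⟨(s : ℝ)/t, div_nonneg s.2.1 htpos.le,
        by rw [div_le_one htpos]; linarith⟩ = s := by
      apply Subtype.ext
      rw [affI_coe]
      rw [show ((0 : unitInterval) : ℝ) = 0 from rfl]
      field_simp
      ring
    exact congrArg (fun w => fmk (c, w)) hXu
  rcases hsE.2 _ hemb hrange hmem with h0 | h1
  · simp only [affI_zero] at h0
    rcases fmk_eq_iff.mp h0 with heq | ⟨h1', -⟩
    · have h2 : s = (0 : unitInterval) := congrArg Prod.snd heq
      rw [h2] at hs
      exact lt_irrefl _ hs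
    · have h1'' : s = 0 := h1'
      rw [h1''] at hs
      exact lt_irrefl _ hs
  · simp only [affI_one] at h1
    rcases fmk_eq_iff.mp h1 with heq | ⟨h1', -⟩
    · have h2 : s = t := congrArg Prod.snd heq
      rw [h2] at hst
      exact lt_irrefl _ hst
    · have h1'' : s = 0 := h1'
      rw [h1''] at hs
      exact lt_irrefl _ hs

/-- Homeomorphisms of a Lelek fan preserve endpoints. -/
lemma homeo_endpoint {L : Set CantorFan} (f : ↥L ≃ₜ ↥L) (x : ↥L)
    (hx : IsEndpoint L ↑x) : IsEndpoint L ↑(f x) := by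
  refine ⟨(f x).2, fun h hemb hrange hmem => ?_⟩
  have hcd : ∀ y, h y ∈ L := fun y => hrange (Set.mem_range_self y)
  set h' : unitInterval → CantorFan :=
    fun y => ↑(f.symm (Set.codRestrict h L hcd y)) with hh'
  have hemb' : Topology.IsEmbedding h' :=
    Topology.IsEmbedding.subtypeVal.comp (f.symm.isEmbedding.comp (hemb.codRestrict _ _))
  have hrange' : Set.range h' ⊆ L := by
    rintro z ⟨y, rfl⟩
    exact (f.symm _).2
  have hmem' : (↑x : CantorFan) ∈ Set.range h' := by
    obtain ⟨y, hy⟩ := hmem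
    refine ⟨y, ?_⟩
    have hcr : Set.codRestrict h L hcd y = f x := Subtype.ext hy
    show (↑(f.symm (Set.codRestrict h L hcd y)) : CantorFan) = ↑x
    rw [hcr, Homeomorph.symm_apply_apply]
  rcases hx.2 h' hemb' hrange' hmem' with h0 | h1
  · left
    have hx0 : x = f.symm (Set.codRestrict h L hcd 0) := Subtype.ext h0
    rw [hx0, Homeomorph.apply_symm_apply]
    rfl
  · right
    have hx1 : x = f.symm (Set.codRestrict h L hcd 1) := Subtype.ext h1
    rw [hx1, Homeomorph.apply_symm_apply]
    rfl

/-- If two homeomorphisms differ, they differ at some endpoint. -/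
lemma exists_endpoint_ne {L : Set CantorFan} (hL : IsLelekFan L) (f g : ↥L ≃ₜ ↥L)
    (hfg : f ≠ g) : ∃ x : ↥L, IsEndpoint L ↑x ∧ f x ≠ g x := by
  by_contra hno
  push_neg at hno
  apply hfg
  apply Homeomorph.ext
  intro x
  have hcl : IsClosed {y : ↥L | f y = g y} := isClosed_eq f.continuous g.continuous
  have hsub : ((Subtype.val : ↥L → CantorFan) ⁻¹' {e | IsEndpoint L e}) ⊆ {y : ↥L | f y = g y} :=
    fun y hy => hno y hy
  have hx : x ∈ closure ((Subtype.val : ↥L → CantorFan) ⁻¹' {e | IsEndpoint L e}) := by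
    rw [closure_subtype]
    have himg : (Subtype.val : ↥L → CantorFan) ''
        ((Subtype.val : ↥L → CantorFan) ⁻¹' {e | IsEndpoint L e}) = {e | IsEndpoint L e} := by
      rw [Set.image_preimage_eq_inter_range, Subtype.range_val]
      exact Set.inter_eq_self_of_subset_left (fun e he => he.1)
    rw [himg]
    exact hL.2.2.2 x.2
  exact (hcl.closure_subset_iff.mpr hsub) hx

end LelekProofAux

/-- The homeomorphism group of the Lelek fan, with the compact-open topology, is totally
disconnected: any two distinct homeomorphisms are separated by a clopen set. -/
theorem lelekFan_homeoGroup_totallyDisconnected (L : Set CantorFan) (hL : IsLelekFan L)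
    (f g : ↥L ≃ₜ ↥L) (hfg : f ≠ g) :
    ∃ U : Set (↥L ≃ₜ ↥L), IsClopen U ∧ f ∈ U ∧ g ∉ U := by
  obtain ⟨x, hxE, hne⟩ := exists_endpoint_ne hL f g hfg
  have hpE : IsEndpoint L ↑(f x) := homeo_endpoint f x hxE
  have hqE : IsEndpoint L ↑(g x) := homeo_endpoint g x hxE
  obtain ⟨a, s, hs, hp⟩ := endpoint_rep hL hpE
  obtain ⟨b, t, ht, hq⟩ := endpoint_rep hL hqE
  have hpq : (↑(f x) : CantorFan) ≠ ↑(g x) := fun h => hne (Subtype.coe_injective h)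
  have hab : a ≠ b := by
    rintro rfl
    have hst : (s : ℝ) ≠ (t : ℝ) := by
      intro h
      apply hpq
      have hs' : s = t := Subtype.ext h
      rw [← hp, ← hq, hs']
    rcases lt_or_gt_of_ne hst with h | h
    · exact endpoint_same_leg hL hs h (by rw [hp]; exact hpE) (by rw [hq]; exact (g x).2)
    · exact endpoint_same_leg hL ht h (by rw [hq]; exact hqE) (by rw [hp]; exact (f x).2)
  obtain ⟨n, hn⟩ := Function.ne_iff.mp hab
  set K : Set (ℕ → Bool) := (fun c : ℕ → Bool => c n) ⁻¹' {a n} with hK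
  set W := fmk '' (K ×ˢ {t' : unitInterval | 0 < (t' : ℝ)}) with hW
  have hWopen : IsOpen W := by
    apply isOpen_fmk_image
      (((isOpen_discrete _).preimage (continuous_apply n)).prod
        (isOpen_Ioi.preimage continuous_subtype_val))
    intro p hp' h0
    have h2 : 0 < (p.2 : ℝ) := hp'.2
    rw [h0] at h2
    rw [show ((0 : unitInterval) : ℝ) = 0 from rfl] at h2
    exact lt_irrefl _ h2
  have hWcl : IsClosed (fmk '' (K ×ˢ (Set.univ : Set unitInterval))) :=
    isClosed_fmk_image
      (((isClosed_discrete _).preimage (continuous_apply n)).prod isClosed_univ)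
  have hclW : closure W ⊆ fmk '' (K ×ˢ (Set.univ : Set unitInterval)) :=
    closure_minimal (Set.image_mono (Set.prod_mono_right (Set.subset_univ _))) hWcl
  have hEclop : ∀ e, IsEndpoint L e → e ∈ closure W → e ∈ W := by
    intro e heE hecl
    obtain ⟨⟨c, t'⟩, ⟨hc, -⟩, he⟩ := hclW hecl
    have ht' : 0 < (t' : ℝ) := by
      refine lt_of_le_of_ne t'.2.1 (fun hh => ?_)
      rw [show t' = 0 from Subtype.ext hh.symm, fanTop_eq c] at he
      rw [← he] at heE
      exact top_not_endpoint hL heE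
    exact ⟨(c, t'), ⟨hc, ht'⟩, he⟩
  set Ev : (↥L ≃ₜ ↥L) → CantorFan := fun h => ↑(h x) with hEv
  have hEvc : Continuous Ev := by
    have h1 : Continuous (fun h : ↥L ≃ₜ ↥L => (⟨⇑h, h.continuous⟩ : C(↥L, ↥L))) :=
      continuous_induced_dom
    have h2 : Continuous (fun φ : C(↥L, ↥L) => φ x) := continuous_eval_const x
    exact continuous_subtype_val.comp (h2.comp h1)
  refine ⟨Ev ⁻¹' W, ⟨?_, hWopen.preimage hEvc⟩, ?_, ?_⟩
  · -- closedness
    have hcompl : (Ev ⁻¹' W)ᶜ = Ev ⁻¹' (closure W)ᶜ := by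
      ext h
      simp only [Set.mem_compl_iff, Set.mem_preimage]
      constructor
      · intro hw hcl
        exact hw (hEclop _ (homeo_endpoint h x hxE) hcl)
      · intro hcl hw
        exact hcl (subset_closure hw)
    have hopen : IsOpen (Ev ⁻¹' W)ᶜ := by
      rw [hcompl]
      exact isClosed_closure.isOpen_compl.preimage hEvc
    exact isOpen_compl_iff.mp hopen
  · exact ⟨(a, s), ⟨rfl, hs⟩, hp⟩
  · rintro ⟨⟨c, t'⟩, ⟨hc, ht'⟩, he⟩
    have hcb : fmk (c, t') = fmk (b, t) := he.trans hq.symm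
    rcases fmk_eq_iff.mp hcb with heq | ⟨h1, h2⟩
    · have hcb' : c = b := congrArg Prod.fst heq
      apply hn
      have hbK : b ∈ K := hcb' ▸ hc
      exact (hbK : b n = a n).symm
    · have h1' : t' = 0 := h1
      have ht'' : 0 < (t' : ℝ) := ht'
      rw [h1', show ((0 : unitInterval) : ℝ) = 0 from rfl] at ht''
      exact lt_irrefl _ ht''
end

section
/- Let T be a finite fan with root r and let s be a binary relation on T. Then the following are equivalent: (i) there exist a finite fan S and epimorphisms p₁, p₂ : S → T such that s = {(p₁(x), p₂(x)) : x ∈ S}; (ii) s is surjective, s(r,r) holds, and for every pair (x,y) with s(x,y), the pair (x,y) is s-connected to (r,r). -/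
/-- A finite rooted tree: a finite partial order with a least element (the root) in which
the set of predecessors of any element is linearly ordered. -/
structure FiniteRootedTree where
  carrier : Type
  [fintype : Fintype carrier]
  [po : PartialOrder carrier]
  [bot : OrderBot carrier]
  chains : ∀ t : carrier, IsChain (· ≤ ·) {s | s ≤ t}

attribute [instance] FiniteRootedTree.fintype FiniteRootedTree.po FiniteRootedTree.bot

/-- `R^T(s,t)` iff `s = t` or `t` is an immediate successor of `s` (i.e. `t` covers `s`). -/
def FiniteRootedTree.R (T : FiniteRootedTree) (s t : T.carrier) : Prop := s = t ∨ s ⋖ t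

/-- An epimorphism between finite rooted trees: a surjection that preserves the
relation `R` and lifts related pairs. -/
def IsTreeEpi (S T : FiniteRootedTree) (φ : S.carrier → T.carrier) : Prop :=
  Function.Surjective φ ∧
  (∀ s s' : S.carrier, S.R s s' → T.R (φ s) (φ s')) ∧
  (∀ t t' : T.carrier, T.R t t' → ∃ s s' : S.carrier, φ s = t ∧ φ s' = t' ∧ S.R s s')

/-- A fan: a finite rooted tree in which any common `R`-predecessor of two incomparable
points (other than the points themselves) is the root, and all branches (maximal chains)
have the same number of elements. -/
def IsFan (T : FiniteRootedTree) : Prop :=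
  (∀ s t p : T.carrier, ¬ s ≤ t → ¬ t ≤ s → p ≠ s → p ≠ t → T.R p s → T.R p t → p = ⊥) ∧
  (∀ b₁ b₂ : Set T.carrier, IsMaxChain (· ≤ ·) b₁ → IsMaxChain (· ≤ ·) b₂ →
    b₁.ncard = b₂.ncard)

/-- A binary relation `s` on a tree is surjective if every point has an `s`-successor
and an `s`-predecessor. -/
def RelSurjective (T : FiniteRootedTree) (s : T.carrier → T.carrier → Prop) : Prop :=
  ∀ t : T.carrier, (∃ u, s t u) ∧ (∃ w, s w t)

/-- `SAdjacent T s p₀ p₁` : the pair `p₁` is `s`-adjacent to the pair `p₀`. -/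
def SAdjacent (T : FiniteRootedTree) (s : T.carrier → T.carrier → Prop)
    (p₀ p₁ : T.carrier × T.carrier) : Prop :=
  T.R p₀.1 p₁.1 ∧ T.R p₀.2 p₁.2 ∧ s p₀.1 p₀.2 ∧ s p₁.1 p₁.2

/-- `SConnected T s a b` : the pair `b` is `s`-connected to the pair `a`, i.e. there is a
finite sequence from `a` to `b` each term of which is `s`-adjacent to the previous one. -/
def SConnected (T : FiniteRootedTree) (s : T.carrier → T.carrier → Prop)
    (a b : T.carrier × T.carrier) : Prop :=
  Relation.ReflTransGen (SAdjacent T s) a b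

namespace FanAux

open Relation

lemma R_le {T : FiniteRootedTree} {a b : T.carrier} (h : T.R a b) : a ≤ b := by
  rcases h with h | h
  · exact h.le
  · exact h.lt.le

lemma exists_covBy {T : FiniteRootedTree} {z : T.carrier} (hz : z ≠ ⊥) :
    ∃ w : T.carrier, w ⋖ z := by
  obtain ⟨a, ha, hmax⟩ := Set.Finite.exists_maximalFor id {u : T.carrier | u < z}
    (Set.toFinite _) ⟨⊥, bot_lt_iff_ne_bot.mpr hz⟩
  refine ⟨a, ha, fun c hac hcz => ?_⟩
  exact (lt_irrefl a) (lt_of_lt_of_le hac (hmax hcz hac.le))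

lemma covBy_unique {T : FiniteRootedTree} {a t t' : T.carrier}
    (ha : a ⋖ t') (htt : t ⋖ t') : a = t := by
  have h1 : a ∈ {u : T.carrier | u ≤ t'} := le_of_lt ha.lt
  have h2 : t ∈ {u : T.carrier | u ≤ t'} := le_of_lt htt.lt
  by_contra hne
  rcases T.chains t' h1 h2 hne with h | h
  · exact ha.2 (lt_of_le_of_ne h hne) htt.lt
  · exact htt.2 (lt_of_le_of_ne h (Ne.symm hne)) ha.lt

lemma epi_bot {S T : FiniteRootedTree} {p : S.carrier → T.carrier} (hp : IsTreeEpi S T p) :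
    p ⊥ = ⊥ := by
  have wf : WellFounded ((· < ·) : S.carrier → S.carrier → Prop) :=
    (Finite.to_wellFoundedLT (α := S.carrier)).wf
  have key : ∀ z : S.carrier, p ⊥ ≤ p z := by
    intro z
    refine wf.induction (C := fun z => p ⊥ ≤ p z) z ?_
    intro z ih
    by_cases hz : z = ⊥
    · rw [hz]
    · obtain ⟨w, hw⟩ := exists_covBy hz
      exact (ih w hw.lt).trans (R_le (hp.2.1 w z (Or.inr hw)))
  obtain ⟨z₀, hz₀⟩ := hp.1 ⊥
  exact le_bot_iff.mp (hz₀ ▸ key z₀)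

lemma forward_dir {T : FiniteRootedTree} {s : T.carrier → T.carrier → Prop}
    {S : FiniteRootedTree} {p₁ p₂ : S.carrier → T.carrier}
    (h₁ : IsTreeEpi S T p₁) (h₂ : IsTreeEpi S T p₂)
    (hrel : ∀ x y : T.carrier, s x y ↔ ∃ z : S.carrier, p₁ z = x ∧ p₂ z = y) :
    RelSurjective T s ∧ s ⊥ ⊥ ∧
      ∀ x y : T.carrier, s x y → SConnected T s (⊥, ⊥) (x, y) := by
  have hs_of : ∀ z : S.carrier, s (p₁ z) (p₂ z) := fun z => (hrel _ _).mpr ⟨z, rfl, rfl⟩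
  have wf : WellFounded ((· < ·) : S.carrier → S.carrier → Prop) :=
    (Finite.to_wellFoundedLT (α := S.carrier)).wf
  have hconn : ∀ z : S.carrier, SConnected T s (⊥, ⊥) (p₁ z, p₂ z) := by
    intro z
    refine wf.induction (C := fun z => SConnected T s (⊥, ⊥) (p₁ z, p₂ z)) z ?_
    intro z ih
    by_cases hz : z = ⊥
    · rw [hz, epi_bot h₁, epi_bot h₂]
      exact ReflTransGen.refl
    · obtain ⟨w, hw⟩ := exists_covBy hz
      refine ReflTransGen.tail (ih w hw.lt) ?_
      exact ⟨h₁.2.1 w z (Or.inr hw), h₂.2.1 w z (Or.inr hw), hs_of w, hs_of z⟩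
  refine ⟨fun t => ⟨?_, ?_⟩, ?_, ?_⟩
  · obtain ⟨z, hz⟩ := h₁.1 t
    exact ⟨p₂ z, hz ▸ hs_of z⟩
  · obtain ⟨z, hz⟩ := h₂.1 t
    exact ⟨p₁ z, hz ▸ hs_of z⟩
  · have := hs_of ⊥
    rwa [epi_bot h₁, epi_bot h₂] at this
  · intro x y hxy
    obtain ⟨z, hz1, hz2⟩ := (hrel x y).mp hxy
    rw [← hz1, ← hz2]
    exact hconn z

/-! ### Paths -/

def NPath (T : FiniteRootedTree) (s : T.carrier → T.carrier → Prop) (k : ℕ)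
    (π : ℕ → T.carrier × T.carrier) : Prop :=
  π 0 = (⊥, ⊥) ∧ ∀ i < k, SAdjacent T s (π i) (π (i + 1))

lemma NPath.sOn {T : FiniteRootedTree} {s : T.carrier → T.carrier → Prop} {k : ℕ}
    {π : ℕ → T.carrier × T.carrier} (hbb : s ⊥ ⊥) (h : NPath T s k π) {i : ℕ} (hi : i ≤ k) :
    s (π i).1 (π i).2 := by
  cases i with
  | zero => rw [h.1]; exact hbb
  | succ j => exact (h.2 j (by omega)).2.2.2

lemma sconnected_npath {T : FiniteRootedTree} {s : T.carrier → T.carrier → Prop}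
    {q : T.carrier × T.carrier} (h : SConnected T s (⊥, ⊥) q) :
    ∃ k π, NPath T s k π ∧ π k = q := by
  induction h with
  | refl => exact ⟨0, fun _ => (⊥, ⊥), ⟨rfl, fun i hi => absurd hi (Nat.not_lt_zero i)⟩, rfl⟩
  | @tail b c hab hbc ih =>
    obtain ⟨k, π, hπ, hk⟩ := ih
    classical
    refine ⟨k + 1, Function.update π (k + 1) c, ⟨?_, ?_⟩, ?_⟩
    · rw [Function.update_of_ne (show (0 : ℕ) ≠ k + 1 by omega)]
      exact hπ.1
    · intro i hi
      rcases Nat.lt_or_ge i k with h' | h'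
      · rw [Function.update_of_ne (show i ≠ k + 1 by omega),
          Function.update_of_ne (show i + 1 ≠ k + 1 by omega)]
        exact hπ.2 i h'
      · have hik : i = k := by omega
        subst hik
        rw [Function.update_of_ne (show i ≠ i + 1 by omega), Function.update_self, hk]
        exact hbc
    · rw [Function.update_self]

lemma npath_pad {T : FiniteRootedTree} {s : T.carrier → T.carrier → Prop} {k : ℕ}
    {π : ℕ → T.carrier × T.carrier} (h : NPath T s k π) (hq : s (π k).1 (π k).2)
    (m : ℕ) :
    NPath T s m fun i => if i ≤ k then π i else π k := by
  constructor
  · show (if 0 ≤ k then π 0 else π k) = (⊥, ⊥)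
    rw [if_pos (Nat.zero_le k)]
    exact h.1
  · intro i _
    show SAdjacent T s (if i ≤ k then π i else π k) (if i + 1 ≤ k then π (i + 1) else π k)
    rcases Nat.lt_or_ge i k with h' | h'
    · rw [if_pos h'.le, if_pos (Nat.succ_le_of_lt h')]
      exact h.2 i h'
    · have e1 : (if i ≤ k then π i else π k) = π k := by
        rcases Nat.eq_or_lt_of_le h' with e | e
        · rw [if_pos e.ge, ← e]
        · exact if_neg (by omega)
      have e2 : (if i + 1 ≤ k then π (i + 1) else π k) = π k := if_neg (by omega)
      rw [e1, e2]
      exact ⟨Or.inl rfl, Or.inl rfl, hq, hq⟩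

/-! ### The constructed fan -/

variable (T : FiniteRootedTree) (s : T.carrier → T.carrier → Prop) (L : ℕ)

def FP : Type :=
  {π : ℕ → T.carrier × T.carrier // NPath T s L π ∧ ∀ i, L ≤ i → π i = π L}

instance : PartialOrder (FP T s L) where
  le a b := a = b
  le_refl _ := rfl
  le_trans _ _ _ h h' := Eq.trans h h'
  le_antisymm _ _ h _ := h

lemma fp_le_iff {a b : FP T s L} : a ≤ b ↔ a = b := Iff.rfl

lemma FP.not_lt {a b : FP T s L} : ¬a < b := by
  intro h
  exact h.ne ((fp_le_iff T s L).mp (le_of_lt h))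

noncomputable instance : Fintype (FP T s L) := by
  have : Finite (FP T s L) := by
    refine Finite.of_injective (fun π : FP T s L => fun j : Fin (L + 1) => π.1 j.1) ?_
    intro a b h
    apply Subtype.ext
    funext i
    rcases le_or_gt i L with hi | hi
    · exact congrFun h ⟨i, by omega⟩
    · have ha := a.2.2 i (le_of_lt hi)
      have hb := b.2.2 i (le_of_lt hi)
      have hL := congrFun h ⟨L, by omega⟩
      rw [ha, hb]
      exact hL
  exact Fintype.ofFinite _

abbrev SCar : Type := WithBot (FP T s L × Fin L)

noncomputable instance : Fintype (SCar T s L) :=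
  inferInstanceAs (Fintype (Option (FP T s L × Fin L)))

lemma scar_coe_le_coe {a b : FP T s L} {i j : Fin L} :
    ((a, i) : SCar T s L) ≤ ((b, j) : SCar T s L) ↔ a = b ∧ i ≤ j := by
  rw [WithBot.coe_le_coe, Prod.mk_le_mk, fp_le_iff]

lemma scar_coe_lt_coe {a b : FP T s L} {i j : Fin L} :
    ((a, i) : SCar T s L) < ((b, j) : SCar T s L) ↔ a = b ∧ i < j := by
  rw [WithBot.coe_lt_coe, Prod.lt_iff]
  constructor
  · rintro (⟨h1, _⟩ | ⟨h1, h2⟩)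
    · exact absurd h1 (FP.not_lt T s L)
    · exact ⟨(fp_le_iff T s L).mp h1, h2⟩
  · rintro ⟨h1, h2⟩
    exact Or.inr ⟨(fp_le_iff T s L).mpr h1, h2⟩

lemma scar_cases (z : SCar T s L) : z = ⊥ ∨ ∃ (a : FP T s L) (i : Fin L), z = ((a, i) : SCar T s L) := by
  induction z using WithBot.recBotCoe with
  | bot => exact Or.inl rfl
  | coe x => exact Or.inr ⟨x.1, x.2, by rw [Prod.mk.eta]⟩

lemma bot_covBy (a : FP T s L) (h0 : 0 < L) :
    (⊥ : SCar T s L) ⋖ ((a, (⟨0, h0⟩ : Fin L)) : SCar T s L) := by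
  refine ⟨WithBot.bot_lt_coe _, fun c hc hc' => ?_⟩
  rcases scar_cases T s L c with rfl | ⟨b, j, rfl⟩
  · exact lt_irrefl _ hc
  · rw [scar_coe_lt_coe T s L] at hc'
    have h2 := Fin.lt_def.mp hc'.2
    simp only [Fin.val_mk] at h2
    omega

lemma covBy_succ (a : FP T s L) (i : Fin L) (h : i.1 + 1 < L) :
    ((a, i) : SCar T s L) ⋖ ((a, (⟨i.1 + 1, h⟩ : Fin L)) : SCar T s L) := by
  refine ⟨(scar_coe_lt_coe T s L).mpr ⟨rfl, by simp only [Fin.lt_def, Fin.val_mk]; omega⟩, fun c hc hc' => ?_⟩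
  rcases scar_cases T s L c with rfl | ⟨b, j, rfl⟩
  · exact not_lt_bot hc
  · rw [scar_coe_lt_coe T s L] at hc hc'
    have h1 := Fin.lt_def.mp hc.2
    have h2 := Fin.lt_def.mp hc'.2
    simp only [Fin.val_mk] at h1 h2
    omega

lemma covBy_cases {z z' : SCar T s L} (h : z ⋖ z') :
    (∃ (a : FP T s L) (h0 : 0 < L), z = ⊥ ∧ z' = ((a, (⟨0, h0⟩ : Fin L)) : SCar T s L)) ∨
    ∃ (a : FP T s L) (i : Fin L) (hi : i.1 + 1 < L),
      z = ((a, i) : SCar T s L) ∧ z' = ((a, (⟨i.1 + 1, hi⟩ : Fin L)) : SCar T s L) := by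
  rcases scar_cases T s L z' with rfl | ⟨a, j, rfl⟩
  · exact absurd h.lt (not_lt_bot)
  rcases scar_cases T s L z with rfl | ⟨b, i, rfl⟩
  · left
    have h0 : 0 < L := j.pos
    have hj : j.1 = 0 := by
      by_contra hj
      exact h.2 (WithBot.bot_lt_coe (a, (⟨0, h0⟩ : Fin L)))
        ((scar_coe_lt_coe T s L).mpr ⟨rfl, by simp only [Fin.lt_def, Fin.val_mk]; omega⟩)
    refine ⟨a, h0, rfl, ?_⟩
    have : j = (⟨0, h0⟩ : Fin L) := Fin.ext hj
    rw [this]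
  · right
    obtain ⟨rfl, hij⟩ := (scar_coe_lt_coe T s L).mp h.lt
    rw [Fin.lt_def] at hij
    have hjL : j.1 < L := j.isLt
    have hj : j.1 = i.1 + 1 := by
      by_contra hj
      have hm : i.1 + 1 < L := by omega
      have l1 : ((b, i) : SCar T s L) < ((b, (⟨i.1 + 1, hm⟩ : Fin L)) : SCar T s L) :=
        (scar_coe_lt_coe T s L).mpr ⟨rfl, by simp only [Fin.lt_def, Fin.val_mk]; omega⟩
      have l2 : ((b, (⟨i.1 + 1, hm⟩ : Fin L)) : SCar T s L) < ((b, j) : SCar T s L) :=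
        (scar_coe_lt_coe T s L).mpr ⟨rfl, by simp only [Fin.lt_def, Fin.val_mk]; omega⟩
      exact h.2 l1 l2
    have hi : i.1 + 1 < L := by omega
    refine ⟨b, i, hi, rfl, ?_⟩
    have : j = (⟨i.1 + 1, hi⟩ : Fin L) := Fin.ext hj
    rw [this]

lemma scar_chains (t : SCar T s L) : IsChain (· ≤ ·) {x : SCar T s L | x ≤ t} := by
  intro x hx y hy hxy
  rcases scar_cases T s L x with rfl | ⟨a, i, rfl⟩
  · exact Or.inl bot_le
  rcases scar_cases T s L y with rfl | ⟨b, j, rfl⟩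
  · exact Or.inr bot_le
  rcases scar_cases T s L t with rfl | ⟨cc, m, rfl⟩
  · have hx' : ((a, i) : SCar T s L) = ⊥ := le_bot_iff.mp hx
    exact absurd hx' (WithBot.coe_ne_bot)
  simp only [Set.mem_setOf_eq] at hx hy
  rw [scar_coe_le_coe T s L] at hx hy
  obtain ⟨rfl, _⟩ := hx
  obtain ⟨h2, _⟩ := hy
  subst h2
  rcases le_total i j with h | h
  · exact Or.inl ((scar_coe_le_coe T s L).mpr ⟨rfl, h⟩)
  · exact Or.inr ((scar_coe_le_coe T s L).mpr ⟨rfl, h⟩)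

noncomputable def Stree : FiniteRootedTree where
  carrier := SCar T s L
  fintype := inferInstance
  po := inferInstance
  bot := inferInstance
  chains := scar_chains T s L

/-! ### Maximal chains of `Stree` -/

def Fmap (a : FP T s L) : Fin (L + 1) → SCar T s L := fun j =>
  if h : j.1 = 0 then ⊥ else ((a, (⟨j.1 - 1, by have := j.isLt; omega⟩ : Fin L)) : SCar T s L)

lemma Fmap_inj (a : FP T s L) : Function.Injective (Fmap T s L a) := by
  intro j j' h
  unfold Fmap at h
  split_ifs at h with h1 h2 h2
  · exact Fin.ext (h1.trans h2.symm)
  · exact absurd h (by simp)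
  · exact absurd h (by simp)
  · have h3 := WithBot.coe_eq_coe.mp h
    have h4 : j.1 - 1 = j'.1 - 1 := congrArg Fin.val (congrArg Prod.snd h3)
    exact Fin.ext (by omega)

lemma Fmap_comparable (a : FP T s L) (j j' : Fin (L + 1)) :
    Fmap T s L a j ≤ Fmap T s L a j' ∨ Fmap T s L a j' ≤ Fmap T s L a j := by
  unfold Fmap
  split_ifs with h1 h2 h2
  · exact Or.inl le_rfl
  · exact Or.inl bot_le
  · exact Or.inr bot_le
  · rcases Nat.le_total j.1 j'.1 with h | h
    · exact Or.inl ((scar_coe_le_coe T s L).mpr ⟨rfl, by simp only [Fin.le_def, Fin.val_mk]; omega⟩)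
    · exact Or.inr ((scar_coe_le_coe T s L).mpr ⟨rfl, by simp only [Fin.le_def, Fin.val_mk]; omega⟩)

def fpConst (hbb : s ⊥ ⊥) : FP T s L :=
  ⟨fun _ => ((⊥ : T.carrier), (⊥ : T.carrier)),
    ⟨rfl, fun _ _ => ⟨Or.inl rfl, Or.inl rfl, hbb, hbb⟩⟩, fun _ _ => rfl⟩

lemma maxChain_eq (hbb : s ⊥ ⊥) (h0 : 0 < L) {c : Set (SCar T s L)}
    (hc : IsMaxChain (· ≤ ·) c) : ∃ a : FP T s L, c = Set.range (Fmap T s L a) := by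
  classical
  have hex : ∃ (a : FP T s L) (i : Fin L), ((a, i) : SCar T s L) ∈ c := by
    by_contra hno
    push_neg at hno
    have hsub : ∀ x ∈ c, x = (⊥ : SCar T s L) := by
      intro x hx
      rcases scar_cases T s L x with rfl | ⟨a, i, rfl⟩
      · rfl
      · exact absurd hx (hno a i)
    have hch : IsChain (· ≤ ·)
        (insert ((fpConst T s L hbb, (⟨0, h0⟩ : Fin L)) : SCar T s L) c) := by
      refine hc.1.insert fun b hb _ => ?_
      rw [hsub b hb]
      exact Or.inr bot_le
    have hwc : ((fpConst T s L hbb, (⟨0, h0⟩ : Fin L)) : SCar T s L) ∈ c := by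
      rw [hc.2 hch (Set.subset_insert _ _)]
      exact Set.mem_insert _ _
    exact WithBot.coe_ne_bot (hsub _ hwc)
  obtain ⟨a, i, hai⟩ := hex
  have hsub : c ⊆ Set.range (Fmap T s L a) := by
    intro x hx
    rcases scar_cases T s L x with rfl | ⟨b, j, rfl⟩
    · exact ⟨⟨0, by omega⟩, by simp [Fmap]⟩
    · have hba : b = a := by
        by_cases hxy : ((b, j) : SCar T s L) = ((a, i) : SCar T s L)
        · exact congrArg Prod.fst (WithBot.coe_eq_coe.mp hxy)
        · rcases hc.1 hx hai hxy with h | h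
          · exact ((scar_coe_le_coe T s L).mp h).1
          · exact (((scar_coe_le_coe T s L).mp h).1).symm
      subst hba
      refine ⟨⟨j.1 + 1, by have := j.isLt; omega⟩, ?_⟩
      simp only [Fmap]
      rw [dif_neg (by omega)]
      congr 1
  have hsup : Set.range (Fmap T s L a) ⊆ c := by
    intro x hx
    obtain ⟨j, rfl⟩ := hx
    have hch : IsChain (· ≤ ·) (insert (Fmap T s L a j) c) := by
      refine hc.1.insert fun b hb _ => ?_
      obtain ⟨j', hj'⟩ := hsub hb
      rw [← hj']
      exact Fmap_comparable T s L a j j'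
    rw [hc.2 hch (Set.subset_insert _ _)]
    exact Set.mem_insert _ _
  exact ⟨a, Set.Subset.antisymm hsub hsup⟩

lemma maxChain_ncard (hbb : s ⊥ ⊥) (h0 : 0 < L) {c : Set (SCar T s L)}
    (hc : IsMaxChain (· ≤ ·) c) : c.ncard = L + 1 := by
  classical
  obtain ⟨a, rfl⟩ := maxChain_eq T s L hbb h0 hc
  rw [← Set.image_univ, ← Finset.coe_univ, ← Finset.coe_image, Set.ncard_coe_finset,
    Finset.card_image_of_injective _ (Fmap_inj T s L a), Finset.card_univ, Fintype.card_fin]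

lemma fan_S (hbb : s ⊥ ⊥) (h0 : 0 < L) : IsFan (Stree T s L) := by
  constructor
  · intro x y p hxy _ hpx hpy hRx hRy
    have hRx' : p = x ∨ p ⋖ x := hRx
    have hRy' : p = y ∨ p ⋖ y := hRy
    rcases hRx' with rfl | hcov
    · exact absurd rfl hpx
    rcases hRy' with rfl | hcov'
    · exact absurd rfl hpy
    rcases covBy_cases T s L hcov with ⟨a, h0', rfl, rfl⟩ | ⟨a, i, hi, rfl, rfl⟩
    · rfl
    · rcases covBy_cases T s L hcov' with ⟨a', h0', hbot, _⟩ | ⟨a', i', hi', heq, rfl⟩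
      · exact absurd hbot (WithBot.coe_ne_bot)
      · exfalso
        have h3 := WithBot.coe_eq_coe.mp heq
        have ha : a = a' := congrArg Prod.fst h3
        have hii : i = i' := congrArg Prod.snd h3
        subst ha
        subst hii
        exact hxy le_rfl
  · intro b₁ b₂ h₁ h₂
    exact (maxChain_ncard T s L hbb h0 h₁).trans (maxChain_ncard T s L hbb h0 h₂).symm

/-! ### The projections -/

def proj1 : SCar T s L → T.carrier :=
  WithBot.recBotCoe ⊥ fun x => (x.1.1 (x.2.1 + 1)).1

def proj2 : SCar T s L → T.carrier :=
  WithBot.recBotCoe ⊥ fun x => (x.1.1 (x.2.1 + 1)).2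

lemma proj1_bot : proj1 T s L ⊥ = ⊥ := rfl
lemma proj2_bot : proj2 T s L ⊥ = ⊥ := rfl
lemma proj1_coe (a : FP T s L) (i : Fin L) :
    proj1 T s L ((a, i) : SCar T s L) = (a.1 (i.1 + 1)).1 := rfl
lemma proj2_coe (a : FP T s L) (i : Fin L) :
    proj2 T s L ((a, i) : SCar T s L) = (a.1 (i.1 + 1)).2 := rfl

lemma to_fp (hbb : s ⊥ ⊥) {k : ℕ} {π : ℕ → T.carrier × T.carrier} (hk : k < L)
    (hπ : NPath T s k π) : ∃ a : FP T s L, ∀ i ≤ k, a.1 i = π i := by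
  have hq : s (π k).1 (π k).2 := hπ.sOn hbb le_rfl
  refine ⟨⟨fun i => if i ≤ k then π i else π k, npath_pad hπ hq L, ?_⟩, ?_⟩
  · intro i hi
    simp only [if_neg (show ¬ i ≤ k by omega), if_neg (show ¬ L ≤ k by omega)]
  · intro i hi
    exact if_pos hi

lemma exists_elem (hbb : s ⊥ ⊥)
    (HL : ∀ q : T.carrier × T.carrier, s q.1 q.2 →
      ∃ k < L, ∃ π, NPath T s k π ∧ π k = q)
    {x y : T.carrier} (hs : s x y) :
    ∃ z : SCar T s L, proj1 T s L z = x ∧ proj2 T s L z = y := by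
  obtain ⟨k, hk, π, hπ, hπk⟩ := HL (x, y) hs
  obtain ⟨a, ha⟩ := to_fp T s L hbb hk hπ
  cases k with
  | zero =>
    have hxy : ((x, y) : T.carrier × T.carrier) = (⊥, ⊥) := by rw [← hπk, hπ.1]
    have hx : x = ⊥ := congrArg Prod.fst hxy
    have hy : y = ⊥ := congrArg Prod.snd hxy
    exact ⟨⊥, by rw [proj1_bot, hx], by rw [proj2_bot, hy]⟩
  | succ j =>
    have hjL : j < L := by omega
    refine ⟨((a, (⟨j, hjL⟩ : Fin L)) : SCar T s L), ?_, ?_⟩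
    · rw [proj1_coe]
      simp only
      rw [ha (j + 1) le_rfl, hπk]
    · rw [proj2_coe]
      simp only
      rw [ha (j + 1) le_rfl, hπk]

lemma elem_s (hbb : s ⊥ ⊥) (z : SCar T s L) :
    s (proj1 T s L z) (proj2 T s L z) := by
  rcases scar_cases T s L z with rfl | ⟨a, i, rfl⟩
  · exact hbb
  · exact NPath.sOn hbb a.2.1 (show i.1 + 1 ≤ L from i.isLt)

lemma proj1_surj (hbb : s ⊥ ⊥)
    (HL : ∀ q : T.carrier × T.carrier, s q.1 q.2 →
      ∃ k < L, ∃ π, NPath T s k π ∧ π k = q)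
    (hsurj : RelSurjective T s) : Function.Surjective (proj1 T s L) := by
  intro t
  obtain ⟨u, hu⟩ := (hsurj t).1
  obtain ⟨z, hz1, _⟩ := exists_elem T s L hbb HL hu
  exact ⟨z, hz1⟩

lemma proj2_surj (hbb : s ⊥ ⊥)
    (HL : ∀ q : T.carrier × T.carrier, s q.1 q.2 →
      ∃ k < L, ∃ π, NPath T s k π ∧ π k = q)
    (hsurj : RelSurjective T s) : Function.Surjective (proj2 T s L) := by
  intro t
  obtain ⟨w, hw⟩ := (hsurj t).2
  obtain ⟨z, _, hz2⟩ := exists_elem T s L hbb HL hw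
  exact ⟨z, hz2⟩

lemma proj1_R (z z' : SCar T s L) (h : z = z' ∨ z ⋖ z') :
    T.R (proj1 T s L z) (proj1 T s L z') := by
  rcases h with rfl | h
  · exact Or.inl rfl
  rcases covBy_cases T s L h with ⟨a, h0', rfl, rfl⟩ | ⟨a, i, hi, rfl, rfl⟩
  · have h1 := (a.2.1.2 0 h0').1
    rw [a.2.1.1] at h1
    exact h1
  · exact (a.2.1.2 (i.1 + 1) hi).1

lemma proj2_R (z z' : SCar T s L) (h : z = z' ∨ z ⋖ z') :
    T.R (proj2 T s L z) (proj2 T s L z') := by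
  rcases h with rfl | h
  · exact Or.inl rfl
  rcases covBy_cases T s L h with ⟨a, h0', rfl, rfl⟩ | ⟨a, i, hi, rfl, rfl⟩
  · have h1 := (a.2.1.2 0 h0').2.1
    rw [a.2.1.1] at h1
    exact h1
  · exact (a.2.1.2 (i.1 + 1) hi).2.1

lemma proj_lift (hbb : s ⊥ ⊥)
    (HL : ∀ q : T.carrier × T.carrier, s q.1 q.2 →
      ∃ k < L, ∃ π, NPath T s k π ∧ π k = q)
    (pr : T.carrier × T.carrier → T.carrier)
    (hpr : ∀ p q, SAdjacent T s p q → T.R (pr p) (pr q))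
    (hprbot : pr ((⊥ : T.carrier), (⊥ : T.carrier)) = ⊥)
    (hex : ∀ t' : T.carrier, ∃ q : T.carrier × T.carrier, s q.1 q.2 ∧ pr q = t')
    {t t' : T.carrier} (ht : t ⋖ t') :
    ∃ (a : FP T s L) (i : ℕ), i < L ∧ pr (a.1 i) = t ∧ pr (a.1 (i + 1)) = t' := by
  classical
  have ht'bot : t' ≠ ⊥ := fun h => absurd (h ▸ ht.lt) (not_lt_bot)
  obtain ⟨q, hq, hqt⟩ := hex t'
  obtain ⟨k, hk, π, hπ, hπk⟩ := HL q hq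
  obtain ⟨a, ha⟩ := to_fp T s L hbb hk hπ
  have hP0 : pr (a.1 0) ≠ t' := by
    rw [ha 0 (Nat.zero_le k), hπ.1, hprbot]
    exact Ne.symm ht'bot
  have hPk : pr (a.1 k) = t' := by
    rw [ha k le_rfl, hπk, hqt]
  set P : ℕ → Prop := fun i => pr (a.1 i) ≠ t' with hP
  set i₀ := Nat.findGreatest P k with hi₀
  have hi₀P : P i₀ := Nat.findGreatest_spec (Nat.zero_le k) hP0
  have hi₀k : i₀ ≤ k := Nat.findGreatest_le k
  have hi₀lt : i₀ < k := lt_of_le_of_ne hi₀k (fun h => (h ▸ hi₀P) hPk)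
  have hnext : pr (a.1 (i₀ + 1)) = t' := by
    by_contra hne
    have : i₀ + 1 ≤ i₀ := Nat.le_findGreatest (by omega) hne
    omega
  have hadj := a.2.1.2 i₀ (by omega)
  have hR := hpr _ _ hadj
  rw [hnext] at hR
  have hcov : pr (a.1 i₀) ⋖ t' := by
    rcases hR with h | h
    · exact absurd h hi₀P
    · exact h
  exact ⟨a, i₀, by omega, covBy_unique hcov ht, hnext⟩

lemma epi1 (hbb : s ⊥ ⊥) (h0 : 0 < L)
    (HL : ∀ q : T.carrier × T.carrier, s q.1 q.2 →
      ∃ k < L, ∃ π, NPath T s k π ∧ π k = q)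
    (hsurj : RelSurjective T s) : IsTreeEpi (Stree T s L) T (proj1 T s L) := by
  refine ⟨proj1_surj T s L hbb HL hsurj, ?_, ?_⟩
  · intro z z' h
    exact proj1_R T s L z z' h
  · intro t t' h
    have h' : t = t' ∨ t ⋖ t' := h
    rcases h' with rfl | hcov
    · obtain ⟨z, hz⟩ := proj1_surj T s L hbb HL hsurj t
      exact ⟨z, z, hz, hz, Or.inl rfl⟩
    · obtain ⟨a, i, hiL, h1, h2⟩ := proj_lift T s L hbb HL Prod.fst
        (fun p q h => h.1) rfl
        (fun t' => by
          obtain ⟨u, hu⟩ := (hsurj t').1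
          exact ⟨(t', u), hu, rfl⟩) hcov
      cases i with
      | zero =>
        refine ⟨⊥, ((a, (⟨0, h0⟩ : Fin L)) : SCar T s L), ?_, h2, Or.inr (bot_covBy T s L a h0)⟩
        exact (proj1_bot T s L).trans (by rw [← h1, a.2.1.1])
      | succ j =>
        refine ⟨((a, (⟨j, by omega⟩ : Fin L)) : SCar T s L),
          ((a, (⟨j + 1, hiL⟩ : Fin L)) : SCar T s L), h1, h2, Or.inr ?_⟩
        exact covBy_succ T s L a ⟨j, by omega⟩ hiL

lemma epi2 (hbb : s ⊥ ⊥) (h0 : 0 < L)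
    (HL : ∀ q : T.carrier × T.carrier, s q.1 q.2 →
      ∃ k < L, ∃ π, NPath T s k π ∧ π k = q)
    (hsurj : RelSurjective T s) : IsTreeEpi (Stree T s L) T (proj2 T s L) := by
  refine ⟨proj2_surj T s L hbb HL hsurj, ?_, ?_⟩
  · intro z z' h
    exact proj2_R T s L z z' h
  · intro t t' h
    have h' : t = t' ∨ t ⋖ t' := h
    rcases h' with rfl | hcov
    · obtain ⟨z, hz⟩ := proj2_surj T s L hbb HL hsurj t
      exact ⟨z, z, hz, hz, Or.inl rfl⟩
    · obtain ⟨a, i, hiL, h1, h2⟩ := proj_lift T s L hbb HL Prod.snd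
        (fun p q h => h.2.1) rfl
        (fun t' => by
          obtain ⟨u, hu⟩ := (hsurj t').2
          exact ⟨(u, t'), hu, rfl⟩) hcov
      cases i with
      | zero =>
        refine ⟨⊥, ((a, (⟨0, h0⟩ : Fin L)) : SCar T s L), ?_, h2, Or.inr (bot_covBy T s L a h0)⟩
        exact (proj2_bot T s L).trans (by rw [← h1, a.2.1.1])
      | succ j =>
        refine ⟨((a, (⟨j, by omega⟩ : Fin L)) : SCar T s L),
          ((a, (⟨j + 1, hiL⟩ : Fin L)) : SCar T s L), h1, h2, Or.inr ?_⟩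
        exact covBy_succ T s L a ⟨j, by omega⟩ hiL

end FanAux

/-- Characterization of the relations `s` on a finite fan `T` arising as
`{(p₁(x), p₂(x)) : x ∈ S}` for a pair of epimorphisms `p₁, p₂ : S → T` from a fan `S`. -/
theorem fanPlus_characterization (T : FiniteRootedTree) (hT : IsFan T)
    (s : T.carrier → T.carrier → Prop) :
    (∃ (S : FiniteRootedTree) (p₁ p₂ : S.carrier → T.carrier), IsFan S ∧
        IsTreeEpi S T p₁ ∧ IsTreeEpi S T p₂ ∧
        (∀ x y : T.carrier, s x y ↔ ∃ z : S.carrier, p₁ z = x ∧ p₂ z = y)) ↔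
      (RelSurjective T s ∧ s ⊥ ⊥ ∧
        ∀ x y : T.carrier, s x y → SConnected T s (⊥, ⊥) (x, y)) := by
  constructor
  · rintro ⟨S, p₁, p₂, _, h₁, h₂, hrel⟩
    exact FanAux.forward_dir h₁ h₂ hrel
  · rintro ⟨hsurj, hbb, hconn⟩
    classical
    set G : T.carrier × T.carrier → ℕ :=
      fun q => sInf {k | ∃ π, FanAux.NPath T s k π ∧ π k = q} with hG
    set L : ℕ := Finset.univ.sup G + 1 with hLdef
    have h0 : 0 < L := Nat.succ_pos _
    have HL : ∀ q : T.carrier × T.carrier, s q.1 q.2 →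
        ∃ k < L, ∃ π, FanAux.NPath T s k π ∧ π k = q := by
      intro q hq
      have hne : {k | ∃ π, FanAux.NPath T s k π ∧ π k = q}.Nonempty := by
        obtain ⟨k, π, h1, h2⟩ := FanAux.sconnected_npath (hconn q.1 q.2 hq)
        exact ⟨k, π, h1, by rw [h2]⟩
      have hmem := Nat.sInf_mem hne
      refine ⟨G q, ?_, hmem⟩
      have hle : G q ≤ Finset.univ.sup G := Finset.le_sup (Finset.mem_univ q)
      omega
    refine ⟨FanAux.Stree T s L, FanAux.proj1 T s L, FanAux.proj2 T s L,
      FanAux.fan_S T s L hbb h0, FanAux.epi1 T s L hbb h0 HL hsurj,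
      FanAux.epi2 T s L hbb h0 HL hsurj, ?_⟩
    intro x y
    constructor
    · intro hxy
      exact FanAux.exists_elem T s L hbb HL hxy
    · rintro ⟨z, rfl, rfl⟩
      exact FanAux.elem_s T s L hbb z
end
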